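/- Let k, n be positive integers with n > k, and let z be a positive integer with z ≤ (n-1)/k (i.e., zk < n). Then Σ_{j=k}^{n} s(n,j)·S(j,k)·(-z)^j = 0. -/

import Mathlib

/-- Unsigned Stirling numbers of the first kind. -/
def stirling1 : ℕ → ℕ → ℕ
  | 0, 0 => 1
  | 0, _ + 1 => 0
  | _ + 1, 0 => 0
  | n + 1, k + 1 => stirling1 n k + n * stirling1 n (k + 1)

/-- Stirling numbers of the second kind. -/
def stirling2 : ℕ → ℕ → ℕ
  | 0, 0 => 1
  | 0, _ + 1 => 0
  | _ + 1, 0 => 0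
  | n + 1, k + 1 => stirling2 n k + (k + 1) * stirling2 n (k + 1)

open Finset

lemma stirling1_eq_zero : ∀ n j : ℕ, n < j → stirling1 n j = 0
  | 0, _ + 1, _ => rfl
  | n + 1, j + 1, h => by
    have h' : n < j := Nat.lt_of_succ_lt_succ h
    simp [stirling1, stirling1_eq_zero n j h',
      stirling1_eq_zero n (j + 1) (h'.trans (Nat.lt_succ_self j))]

lemma stirling2_eq_zero : ∀ j k : ℕ, j < k → stirling2 j k = 0
  | 0, _ + 1, _ => rfl
  | j + 1, k + 1, h => by
    have h' : j < k := Nat.lt_of_succ_lt_succ h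
    simp [stirling2, stirling2_eq_zero j k h',
      stirling2_eq_zero j (k + 1) (h'.trans (Nat.lt_succ_self k))]

lemma stirling1_sum (n : ℕ) (x : ℤ) :
    ∑ j ∈ range (n + 1), (stirling1 n j : ℤ) * x ^ j = ∏ m ∈ range n, (x + m) := by
  induction n with
  | zero => simp [stirling1]
  | succ n ih =>
    have key : ∑ j ∈ range (n + 1), (stirling1 n (j + 1) : ℤ) * x ^ (j + 1)
        = (∏ m ∈ range n, (x + m)) - (stirling1 n 0 : ℤ) := by
      have h1 : ∑ j ∈ range (n + 2), (stirling1 n j : ℤ) * x ^ j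
          = (∑ j ∈ range (n + 1), (stirling1 n (j + 1) : ℤ) * x ^ (j + 1))
            + (stirling1 n 0 : ℤ) * x ^ 0 :=
        Finset.sum_range_succ' _ (n + 1)
      have h2 : ∑ j ∈ range (n + 2), (stirling1 n j : ℤ) * x ^ j
          = ∏ m ∈ range n, (x + m) := by
        rw [Finset.sum_range_succ, stirling1_eq_zero n (n + 1) (Nat.lt_succ_self n), ih]
        simp
      rw [h2] at h1
      simp at h1
      linarith
    have hmain : ∑ j ∈ range (n + 2), (stirling1 (n + 1) j : ℤ) * x ^ j
        = (∑ j ∈ range (n + 1), (stirling1 (n + 1) (j + 1) : ℤ) * x ^ (j + 1))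
          + (stirling1 (n + 1) 0 : ℤ) * x ^ 0 :=
      Finset.sum_range_succ' _ (n + 1)
    rw [hmain]
    have h0 : (stirling1 (n + 1) 0 : ℤ) = 0 := by simp [stirling1]
    rw [h0]
    have hrec : ∑ j ∈ range (n + 1), (stirling1 (n + 1) (j + 1) : ℤ) * x ^ (j + 1)
        = ∑ j ∈ range (n + 1),
            (((stirling1 n j : ℤ) * x ^ j) * x + (n : ℤ) * ((stirling1 n (j + 1) : ℤ) * x ^ (j + 1))) := by
      refine Finset.sum_congr rfl fun j _ => ?_
      show ((stirling1 n j + n * stirling1 n (j + 1) : ℕ) : ℤ) * x ^ (j + 1) = _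
      push_cast
      ring
    rw [hrec, Finset.sum_add_distrib, ← Finset.sum_mul, ← Finset.mul_sum, ih, key,
      Finset.prod_range_succ]
    have hn0 : (n : ℤ) * (stirling1 n 0 : ℤ) = 0 := by
      cases n with
      | zero => simp
      | succ m => simp [stirling1]
    ring_nf
    ring_nf at hn0 ⊢
    nlinarith [hn0]

lemma aux_shift (j k : ℕ) :
    ∑ i ∈ range (k + 1), (-1 : ℤ) ^ i * (Nat.choose k i : ℤ) * ((i : ℤ) + 1) ^ j
      = (∑ i ∈ range (k + 1), (-1 : ℤ) ^ i * (Nat.choose k i : ℤ) * (i : ℤ) ^ j)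
        - ∑ i ∈ range (k + 2), (-1 : ℤ) ^ i * (Nat.choose (k + 1) i : ℤ) * (i : ℤ) ^ j := by
  have h1 : ∑ i ∈ range (k + 2), (-1 : ℤ) ^ i * (Nat.choose (k + 1) i : ℤ) * (i : ℤ) ^ j
      = -((∑ i ∈ range (k + 1), (-1 : ℤ) ^ i * (Nat.choose k i : ℤ) * ((i : ℤ) + 1) ^ j)
          + ∑ i ∈ range (k + 1), (-1 : ℤ) ^ i * (Nat.choose k (i + 1) : ℤ) * ((i : ℤ) + 1) ^ j)
        + (0 : ℤ) ^ j := by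
    rw [Finset.sum_range_succ' _ (k + 1)]
    have hterm : ∀ i ∈ range (k + 1),
        (-1 : ℤ) ^ (i + 1) * (Nat.choose (k + 1) (i + 1) : ℤ) * (((i : ℕ) + 1 : ℕ) : ℤ) ^ j
          = -((-1 : ℤ) ^ i * (Nat.choose k i : ℤ) * ((i : ℤ) + 1) ^ j
              + (-1 : ℤ) ^ i * (Nat.choose k (i + 1) : ℤ) * ((i : ℤ) + 1) ^ j) := by
      intro i _
      rw [Nat.choose_succ_succ]
      push_cast
      ring
    rw [Finset.sum_congr rfl hterm, Finset.sum_neg_distrib, Finset.sum_add_distrib]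
    simp
  have h2 : ∑ i ∈ range (k + 1), (-1 : ℤ) ^ i * (Nat.choose k i : ℤ) * (i : ℤ) ^ j
      = -(∑ i ∈ range (k + 1), (-1 : ℤ) ^ i * (Nat.choose k (i + 1) : ℤ) * ((i : ℤ) + 1) ^ j)
        + (0 : ℤ) ^ j := by
    rw [Finset.sum_range_succ' _ k]
    have hlast : ∑ i ∈ range (k + 1), (-1 : ℤ) ^ i * (Nat.choose k (i + 1) : ℤ) * ((i : ℤ) + 1) ^ j
        = ∑ i ∈ range k, (-1 : ℤ) ^ i * (Nat.choose k (i + 1) : ℤ) * ((i : ℤ) + 1) ^ j := by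
      rw [Finset.sum_range_succ, Nat.choose_succ_self]
      simp
    rw [hlast]
    have hterm : ∀ i ∈ range k,
        (-1 : ℤ) ^ (i + 1) * (Nat.choose k (i + 1) : ℤ) * (((i : ℕ) + 1 : ℕ) : ℤ) ^ j
          = -((-1 : ℤ) ^ i * (Nat.choose k (i + 1) : ℤ) * ((i : ℤ) + 1) ^ j) := by
      intro i _
      push_cast
      ring
    rw [Finset.sum_congr rfl hterm, Finset.sum_neg_distrib]
    simp
  linarith

lemma stirling2_sum : ∀ j k : ℕ,
    (Nat.factorial k : ℤ) * (stirling2 j k : ℤ)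
      = (-1) ^ k * ∑ i ∈ range (k + 1), (-1 : ℤ) ^ i * (Nat.choose k i : ℤ) * (i : ℤ) ^ j := by
  intro j
  induction j with
  | zero =>
    intro k
    cases k with
    | zero => simp [stirling2]
    | succ k =>
      have h : ∑ i ∈ range (k + 2), (-1 : ℤ) ^ i * (Nat.choose (k + 1) i : ℤ) * (i : ℤ) ^ 0
          = ∑ i ∈ range (k + 2), (-1 : ℤ) ^ i * (Nat.choose (k + 1) i : ℤ) := by
        simp
      rw [h, Int.alternating_sum_range_choose]
      simp [stirling2]
  | succ j ih =>
    intro k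
    cases k with
    | zero => simp [stirling2]
    | succ k =>
      have hF : ∑ i ∈ range (k + 2), (-1 : ℤ) ^ i * (Nat.choose (k + 1) i : ℤ) * (i : ℤ) ^ (j + 1)
          = -((k : ℤ) + 1) *
              ∑ i ∈ range (k + 1), (-1 : ℤ) ^ i * (Nat.choose k i : ℤ) * ((i : ℤ) + 1) ^ j := by
        rw [Finset.sum_range_succ' _ (k + 1)]
        have hterm : ∀ i ∈ range (k + 1),
            (-1 : ℤ) ^ (i + 1) * (Nat.choose (k + 1) (i + 1) : ℤ) * (((i : ℕ) + 1 : ℕ) : ℤ) ^ (j + 1)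
              = -((k : ℤ) + 1) * ((-1 : ℤ) ^ i * (Nat.choose k i : ℤ) * ((i : ℤ) + 1) ^ j) := by
          intro i _
          have hc : (k + 1) * Nat.choose k i = Nat.choose (k + 1) (i + 1) * (i + 1) :=
            Nat.add_one_mul_choose_eq k i
          have hc' : ((k : ℤ) + 1) * (Nat.choose k i : ℤ)
              = (Nat.choose (k + 1) (i + 1) : ℤ) * ((i : ℤ) + 1) := by exact_mod_cast hc
          push_cast
          linear_combination ((-1 : ℤ) ^ i * ((i : ℤ) + 1) ^ j) * hc'
        rw [Finset.sum_congr rfl hterm, ← Finset.mul_sum]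
        simp
      have hshift := aux_shift j k
      have ih1 := ih k
      have ih2 := ih (k + 1)
      rw [Nat.factorial_succ] at ih2
      push_cast at ih2
      have h2 : (stirling2 (j + 1) (k + 1) : ℤ)
          = (stirling2 j k : ℤ) + ((k : ℤ) + 1) * (stirling2 j (k + 1) : ℤ) := by
        show ((stirling2 j k + (k + 1) * stirling2 j (k + 1) : ℕ) : ℤ) = _
        push_cast; ring
      have h3 : (Nat.factorial (k + 1) : ℤ) = ((k : ℤ) + 1) * (Nat.factorial k : ℤ) := by
        rw [Nat.factorial_succ]; push_cast; ring
      rw [h2, h3, hF]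
      rw [hshift] at hF ⊢
      linear_combination ((k : ℤ) + 1) * ih1 + ((k : ℤ) + 1) * ih2

open scoped BigOperators

theorem stmt_12 (n k z : ℕ) (hk : 1 ≤ k) (hkn : k < n) (hz : 1 ≤ z) (hzk : z * k < n) :
    (∑ j ∈ Finset.Icc k n,
        (stirling1 n j : ℤ) * (stirling2 j k : ℤ) * (-(z : ℤ)) ^ j) = 0 := by
  set t : ℤ := -(z : ℤ) with ht
  have hext : (∑ j ∈ Finset.Icc k n, (stirling1 n j : ℤ) * (stirling2 j k : ℤ) * t ^ j)
      = ∑ j ∈ range (n + 1), (stirling1 n j : ℤ) * (stirling2 j k : ℤ) * t ^ j := by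
    refine Finset.sum_subset ?_ ?_
    · intro j hj
      rw [Finset.mem_Icc] at hj
      rw [Finset.mem_range]
      omega
    · intro j hj hnot
      rw [Finset.mem_range] at hj
      rw [Finset.mem_Icc] at hnot
      have : j < k := by omega
      rw [stirling2_eq_zero j k this]
      simp
  rw [hext]
  have hprod : ∀ i ∈ range (k + 1), ∏ m ∈ range n, ((i : ℤ) * t + m) = 0 := by
    intro i hi
    rw [Finset.mem_range] at hi
    have hmem : i * z ∈ range n := by
      rw [Finset.mem_range]
      calc i * z ≤ k * z := Nat.mul_le_mul_right _ (by omega)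
        _ = z * k := Nat.mul_comm _ _
        _ < n := hzk
    refine Finset.prod_eq_zero hmem ?_
    rw [ht]
    push_cast
    ring
  have hmul : (Nat.factorial k : ℤ)
      * ∑ j ∈ range (n + 1), (stirling1 n j : ℤ) * (stirling2 j k : ℤ) * t ^ j = 0 := by
    rw [Finset.mul_sum]
    have h1 : ∀ j ∈ range (n + 1),
        (Nat.factorial k : ℤ) * ((stirling1 n j : ℤ) * (stirling2 j k : ℤ) * t ^ j)
          = ∑ i ∈ range (k + 1),
              (-1 : ℤ) ^ k * ((-1 : ℤ) ^ i * (Nat.choose k i : ℤ))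
                * ((stirling1 n j : ℤ) * ((i : ℤ) * t) ^ j) := by
      intro j _
      have h := stirling2_sum j k
      calc (Nat.factorial k : ℤ) * ((stirling1 n j : ℤ) * (stirling2 j k : ℤ) * t ^ j)
          = ((Nat.factorial k : ℤ) * (stirling2 j k : ℤ)) * ((stirling1 n j : ℤ) * t ^ j) := by
            ring
        _ = ((-1) ^ k * ∑ i ∈ range (k + 1), (-1 : ℤ) ^ i * (Nat.choose k i : ℤ) * (i : ℤ) ^ j)
              * ((stirling1 n j : ℤ) * t ^ j) := by rw [h]
        _ = _ := by
            rw [Finset.mul_sum, Finset.sum_mul]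
            refine Finset.sum_congr rfl fun i _ => ?_
            rw [mul_pow]
            ring
    rw [Finset.sum_congr rfl h1, Finset.sum_comm]
    refine Finset.sum_eq_zero fun i hi => ?_
    rw [← Finset.mul_sum, stirling1_sum n ((i : ℤ) * t), hprod i hi, mul_zero]
  have hfac : (Nat.factorial k : ℤ) ≠ 0 := by
    exact_mod_cast Nat.factorial_ne_zero k
  exact (mul_eq_zero.mp hmul).resolve_left hfac
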